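/- Let G be a simple connected graph on n vertices with m edges, let v_i be a vertex of degree d_i, and set n' = max{2m/n, n − 2m/n}. Then LE_G(v_i) ≥ ( (2m/n − d_i)² + d_i ) / n'. -/

import Mathlib

open Matrix BigOperators Finset

/-- The positive semidefinite square root of a positive semidefinite matrix (the definition
of Mathlib's former `Matrix.PosSemidef.sqrt`, removed since). -/
noncomputable def Matrix.PosSemidef.sqrt {m : Type*} [Fintype m] [DecidableEq m]
    {A : Matrix m m ℝ} (hA : A.PosSemidef) : Matrix m m ℝ :=
  hA.1.eigenvectorUnitary.1 * diagonal ((↑) ∘ (√·) ∘ hA.1.eigenvalues) *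
    (star hA.1.eigenvectorUnitary : Matrix m m ℝ)

open scoped MatrixOrder in
lemma Matrix.PosSemidef.sqrt_eq_CFC {m : Type*} [Fintype m] [DecidableEq m]
    {A : Matrix m m ℝ} (hA : A.PosSemidef) : hA.sqrt = CFC.sqrt A := by
  rw [CFC.sqrt_eq_cfc, cfc_nnreal_eq_real _ A hA.nonneg, hA.1.cfc_eq]
  simp only [IsHermitian.cfc, Unitary.conjStarAlgAut_apply, Matrix.PosSemidef.sqrt]
  congr 2
  ext i j
  simp [diagonal_apply, hA.eigenvalues_nonneg]

/-- The absolute value of a real matrix `B`, defined as `(B * Bᵀ)^(1/2)`. -/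
noncomputable def matAbs {n : ℕ} (B : Matrix (Fin n) (Fin n) ℝ) : Matrix (Fin n) (Fin n) ℝ :=
  (Matrix.conjTranspose_eq_transpose_of_trivial B ▸
    Matrix.posSemidef_self_mul_conjTranspose B : (B * Bᵀ).PosSemidef).sqrt

/-- The (adjacency) energy of the vertex `i` of the graph `G`: `|A|_{ii}`. -/
noncomputable def vertexEnergy {n : ℕ} (G : SimpleGraph (Fin n)) [DecidableRel G.Adj]
    (i : Fin n) : ℝ :=
  matAbs (G.adjMatrix ℝ) i i

/-- The Laplacian energy of the vertex `i` of the graph `G`: `(|L - (2m/n) I|)_{ii}`. -/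
noncomputable def vertexLapEnergy {n : ℕ} (G : SimpleGraph (Fin n)) [DecidableRel G.Adj]
    (i : Fin n) : ℝ :=
  matAbs (G.lapMatrix ℝ - ((2 * (G.edgeFinset.card : ℝ)) / n) • 1) i i

/-- The normalized Laplacian `𝓛 = I - D^{-1/2} A D^{-1/2}` of the graph `G`. -/
noncomputable def normLap {n : ℕ} (G : SimpleGraph (Fin n)) [DecidableRel G.Adj] :
    Matrix (Fin n) (Fin n) ℝ :=
  1 - Matrix.diagonal (fun i => (Real.sqrt (G.degree i))⁻¹) * G.adjMatrix ℝ *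
      Matrix.diagonal (fun i => (Real.sqrt (G.degree i))⁻¹)

/-- The normalized Laplacian energy of the vertex `i` of the graph `G`: `(|𝓛 - I|)_{ii}`. -/
noncomputable def vertexNormLapEnergy {n : ℕ} (G : SimpleGraph (Fin n)) [DecidableRel G.Adj]
    (i : Fin n) : ℝ :=
  matAbs (normLap G - 1) i i

lemma lap_quadform_le {n : ℕ} (G : SimpleGraph (Fin n)) [DecidableRel G.Adj]
    (x : Fin n → ℝ) : x ⬝ᵥ (G.lapMatrix ℝ *ᵥ x) ≤ n * (x ⬝ᵥ x) := by
  rw [← Matrix.toLinearMap₂'_apply', SimpleGraph.lapMatrix_toLinearMap₂']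
  have hrow : ∀ i : Fin n, ∑ j, (x i - x j)^2
      = n * x i ^ 2 - 2 * x i * (∑ j, x j) + ∑ j, x j ^ 2 := by
    intro i
    simp_rw [sub_sq]
    rw [Finset.sum_add_distrib, Finset.sum_sub_distrib, Finset.sum_const, Finset.card_univ,
      Fintype.card_fin, ← Finset.mul_sum, nsmul_eq_mul]
  have h1 : (∑ i, ∑ j, if G.Adj i j then (x i - x j)^2 else 0)
      ≤ ∑ i, ∑ j, (x i - x j)^2 := by
    refine Finset.sum_le_sum fun i _ => Finset.sum_le_sum fun j _ => ?_
    split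
    · exact le_refl _
    · positivity
  have h2 : ∑ i, ∑ j, (x i - x j)^2
      = 2 * n * (∑ j, x j ^ 2) - 2 * (∑ j, x j)^2 := by
    simp_rw [hrow]
    rw [Finset.sum_add_distrib, Finset.sum_sub_distrib, Finset.sum_const, Finset.card_univ,
      Fintype.card_fin, ← Finset.mul_sum, ← Finset.sum_mul, ← Finset.mul_sum, nsmul_eq_mul]
    ring
  have hdp : x ⬝ᵥ x = ∑ j, x j ^ 2 := by simp [dotProduct, sq]
  rw [hdp]
  have hsq : (0:ℝ) ≤ (∑ j, x j)^2 := sq_nonneg _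
  nlinarith [h1, h2]

section Main
variable {n : ℕ} (G : SimpleGraph (Fin n)) [DecidableRel G.Adj]

noncomputable def cst (G : SimpleGraph (Fin n)) [DecidableRel G.Adj] : ℝ :=
  2 * (G.edgeFinset.card : ℝ) / n

noncomputable def Mm (G : SimpleGraph (Fin n)) [DecidableRel G.Adj] :
    Matrix (Fin n) (Fin n) ℝ :=
  G.lapMatrix ℝ - (cst G) • 1

lemma Mm_herm : (Mm G).IsHermitian := by
  have h1 : ((cst G) • (1 : Matrix (Fin n) (Fin n) ℝ)).IsHermitian := by
    simp [Matrix.IsHermitian, Matrix.conjTranspose_smul]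
  exact ((SimpleGraph.posSemidef_lapMatrix ℝ G).1).sub h1

-- eigenvalue bounds
lemma ev_bound (k : Fin n) :
    |(Mm_herm G).eigenvalues k| ≤ max (cst G) ((n : ℝ) - cst G) := by
  set hM := Mm_herm G
  set v : Fin n → ℝ := ⇑(hM.eigenvectorBasis k) with hv
  have hMv : Mm G *ᵥ v = hM.eigenvalues k • v := hM.mulVec_eigenvectorBasis k
  have hvv : v ⬝ᵥ v = 1 := by
    have h1 : ‖hM.eigenvectorBasis k‖ = 1 := hM.eigenvectorBasis.orthonormal.1 k
    have : (inner ℝ (hM.eigenvectorBasis k) (hM.eigenvectorBasis k) : ℝ) = 1 := by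
      rw [real_inner_self_eq_norm_sq, h1]; norm_num
    simp only [PiLp.inner_apply, RCLike.inner_apply, conj_trivial] at this
    simpa [PiLp.inner_apply, dotProduct, mul_comm] using this
  have hLv : G.lapMatrix ℝ *ᵥ v = (hM.eigenvalues k + cst G) • v := by
    have : G.lapMatrix ℝ = Mm G + (cst G) • 1 := by simp [Mm]
    rw [this, add_mulVec, hMv, smul_mulVec, one_mulVec, add_smul]
  have hquad : v ⬝ᵥ (G.lapMatrix ℝ *ᵥ v) = hM.eigenvalues k + cst G := by
    rw [hLv, dotProduct_smul, hvv, smul_eq_mul, mul_one]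
  have hge : 0 ≤ hM.eigenvalues k + cst G := by
    have := (SimpleGraph.posSemidef_lapMatrix ℝ G).dotProduct_mulVec_nonneg v
    rwa [star_trivial, hquad] at this
  have hle : hM.eigenvalues k + cst G ≤ n := by
    have := lap_quadform_le G v
    rwa [hquad, hvv, mul_one] at this
  rw [abs_le]
  constructor
  · have : -(cst G) ≤ hM.eigenvalues k := by linarith
    exact le_trans (by simp [neg_le_neg_iff, le_max_iff, le_refl, true_or]
      : -(max (cst G) ((n : ℝ) - cst G)) ≤ -(cst G)) this
  · exact le_trans (by linarith : hM.eigenvalues k ≤ (n:ℝ) - cst G) (le_max_right _ _)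

-- entries of U * diagonal d * star U
lemma udu_entry (d : Fin n → ℝ) (i : Fin n) :
    (((Mm_herm G).eigenvectorUnitary : Matrix (Fin n) (Fin n) ℝ) * Matrix.diagonal d *
      star ((Mm_herm G).eigenvectorUnitary : Matrix (Fin n) (Fin n) ℝ)) i i
    = ∑ k, d k * (((Mm_herm G).eigenvectorUnitary : Matrix (Fin n) (Fin n) ℝ) i k)^2 := by
  rw [Matrix.mul_apply]
  refine Finset.sum_congr rfl fun k _ => ?_
  rw [Matrix.mul_diagonal, Matrix.star_apply, star_trivial]
  ring

lemma spectral_Mm :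
    Mm G = ((Mm_herm G).eigenvectorUnitary : Matrix (Fin n) (Fin n) ℝ) *
      Matrix.diagonal ((Mm_herm G).eigenvalues) *
      star ((Mm_herm G).eigenvectorUnitary : Matrix (Fin n) (Fin n) ℝ) := by
  have h := (Mm_herm G).spectral_theorem
  have : (RCLike.ofReal ∘ (Mm_herm G).eigenvalues : Fin n → ℝ) = (Mm_herm G).eigenvalues := by
    funext k; simp
  rwa [this] at h

open scoped MatrixOrder in
lemma matAbs_Mm :
    matAbs (Mm G) = ((Mm_herm G).eigenvectorUnitary : Matrix (Fin n) (Fin n) ℝ) *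
      Matrix.diagonal (fun k => |(Mm_herm G).eigenvalues k|) *
      star ((Mm_herm G).eigenvectorUnitary : Matrix (Fin n) (Fin n) ℝ) := by
  set U := ((Mm_herm G).eigenvectorUnitary : Matrix (Fin n) (Fin n) ℝ)
  set N := U * Matrix.diagonal (fun k => |(Mm_herm G).eigenvalues k|) * star U with hN
  have hNpsd : N.PosSemidef := by
    refine PosSemidef.mul_mul_conjTranspose_same ?_ U
    exact Matrix.PosSemidef.diagonal (fun k => abs_nonneg _)
  have hUU : star U * U = 1 := Matrix.UnitaryGroup.star_mul_self _
  have hsq : N ^ 2 = Mm G * (Mm G)ᵀ := by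
    have hMT : (Mm G)ᵀ = Mm G := by
      have := (Mm_herm G).eq
      rwa [Matrix.conjTranspose_eq_transpose_of_trivial] at this
    have key : ∀ D E : Matrix (Fin n) (Fin n) ℝ,
        (U * D * star U) * (U * E * star U) = U * (D * E) * star U := by
      intro D E
      rw [Matrix.mul_assoc U E (star U), Matrix.mul_assoc (U * D) (star U) (U * (E * star U)),
        ← Matrix.mul_assoc (star U) U (E * star U), hUU, Matrix.one_mul,
        ← Matrix.mul_assoc (U * D) E (star U), Matrix.mul_assoc U D E]
    have hdd : Matrix.diagonal (fun k => |(Mm_herm G).eigenvalues k|) *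
        Matrix.diagonal (fun k => |(Mm_herm G).eigenvalues k|) =
        Matrix.diagonal ((Mm_herm G).eigenvalues) * Matrix.diagonal ((Mm_herm G).eigenvalues) := by
      rw [Matrix.diagonal_mul_diagonal, Matrix.diagonal_mul_diagonal]
      congr 1
      funext k
      simp [← sq, sq_abs]
    rw [hMT, sq, hN, key, hdd, ← key, ← spectral_Mm]
  unfold matAbs
  rw [Matrix.PosSemidef.sqrt_eq_CFC]
  exact CFC.sqrt_unique (by rw [← sq]; exact hsq) hNpsd.nonneg

end Main

section Main2
variable {n : ℕ} (G : SimpleGraph (Fin n)) [DecidableRel G.Adj]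

lemma MmMm_diag (i : Fin n) : (Mm G * (Mm G)ᵀ) i i
    = (cst G - (G.degree i : ℝ))^2 + (G.degree i : ℝ) := by
  rw [Matrix.mul_apply]
  have hterm : ∀ j, Mm G i j * (Mm G)ᵀ j i
      = (if i = j then ((G.degree i : ℝ) - cst G)^2 else 0)
        + (if G.Adj i j then 1 else 0) := by
    intro j
    rw [Matrix.transpose_apply]
    by_cases h : i = j
    · subst h
      simp [Mm, SimpleGraph.lapMatrix, SimpleGraph.degMatrix, Matrix.one_apply]
      ring
    · simp only [Mm, SimpleGraph.lapMatrix, Matrix.sub_apply, SimpleGraph.degMatrix,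
        Matrix.diagonal_apply_ne _ h, Matrix.smul_apply, Matrix.one_apply_ne h,
        SimpleGraph.adjMatrix_apply, smul_eq_mul, mul_zero, sub_zero, zero_sub,
        neg_mul_neg, if_neg h, zero_add]
      split <;> norm_num
  rw [Finset.sum_congr rfl (fun j _ => hterm j), Finset.sum_add_distrib,
    Finset.sum_ite_eq univ i (fun _ => ((G.degree i : ℝ) - cst G)^2), if_pos (Finset.mem_univ i),
    ← SimpleGraph.degree_eq_sum_if_adj]
  ring

lemma MmMm_spectral : Mm G * (Mm G)ᵀ =
    ((Mm_herm G).eigenvectorUnitary : Matrix (Fin n) (Fin n) ℝ) *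
      Matrix.diagonal (fun k => ((Mm_herm G).eigenvalues k)^2) *
      star ((Mm_herm G).eigenvectorUnitary : Matrix (Fin n) (Fin n) ℝ) := by
  set U := ((Mm_herm G).eigenvectorUnitary : Matrix (Fin n) (Fin n) ℝ)
  have hUU : star U * U = 1 := Matrix.UnitaryGroup.star_mul_self _
  have key : ∀ D E : Matrix (Fin n) (Fin n) ℝ,
      (U * D * star U) * (U * E * star U) = U * (D * E) * star U := by
    intro D E
    rw [Matrix.mul_assoc U E (star U), Matrix.mul_assoc (U * D) (star U) (U * (E * star U)),
      ← Matrix.mul_assoc (star U) U (E * star U), hUU, Matrix.one_mul,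
      ← Matrix.mul_assoc (U * D) E (star U), Matrix.mul_assoc U D E]
  have hMT : (Mm G)ᵀ = Mm G := by
    have := (Mm_herm G).eq
    rwa [Matrix.conjTranspose_eq_transpose_of_trivial] at this
  have hdd : Matrix.diagonal (fun k => ((Mm_herm G).eigenvalues k)^2)
      = Matrix.diagonal ((Mm_herm G).eigenvalues) * Matrix.diagonal ((Mm_herm G).eigenvalues) := by
    rw [Matrix.diagonal_mul_diagonal]
    congr 1
    funext k
    simp [sq]
  rw [hMT, hdd, ← key, ← spectral_Mm]

end Main2

theorem stmt7 {n : ℕ} (G : SimpleGraph (Fin n)) [DecidableRel G.Adj]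
    (hconn : G.Connected) (i : Fin n) :
    vertexLapEnergy G i ≥
      ((2 * (G.edgeFinset.card : ℝ) / n - (G.degree i : ℝ)) ^ 2 + (G.degree i : ℝ)) /
        max (2 * (G.edgeFinset.card : ℝ) / n) ((n : ℝ) - 2 * (G.edgeFinset.card : ℝ) / n) := by
  have hn : (0:ℝ) < n := by exact_mod_cast i.pos
  have hcc : cst G = 2 * (G.edgeFinset.card : ℝ) / n := rfl
  set c := 2 * (G.edgeFinset.card : ℝ) / n with hc
  set n' := max c ((n:ℝ) - c) with hn'
  have hn'pos : 0 < n' := by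
    have h1 := le_max_left c ((n:ℝ) - c)
    have h2 := le_max_right c ((n:ℝ) - c)
    rw [← hn'] at h1 h2
    linarith
  rw [ge_iff_le, div_le_iff₀ hn'pos]
  set U := ((Mm_herm G).eigenvectorUnitary : Matrix (Fin n) (Fin n) ℝ) with hU
  have hLE : vertexLapEnergy G i = ∑ k, |(Mm_herm G).eigenvalues k| * (U i k)^2 := by
    unfold vertexLapEnergy
    have h0 : (G.lapMatrix ℝ - (2 * (G.edgeFinset.card : ℝ) / n) • 1) = Mm G := rfl
    rw [h0, matAbs_Mm, udu_entry]
  have hMM : (c - (G.degree i:ℝ))^2 + (G.degree i:ℝ)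
      = ∑ k, ((Mm_herm G).eigenvalues k)^2 * (U i k)^2 := by
    rw [← hcc, ← MmMm_diag, MmMm_spectral, udu_entry]
  have hstep : ∀ k, ((Mm_herm G).eigenvalues k)^2 * (U i k)^2
      ≤ n' * (|(Mm_herm G).eigenvalues k| * (U i k)^2) := by
    intro k
    have hb := ev_bound G k
    rw [hcc, ← hn'] at hb
    have habs : ((Mm_herm G).eigenvalues k)^2 = |(Mm_herm G).eigenvalues k|^2 := (sq_abs _).symm
    have hu : (0:ℝ) ≤ (U i k)^2 := sq_nonneg _
    have ha : (0:ℝ) ≤ |(Mm_herm G).eigenvalues k| := abs_nonneg _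
    calc ((Mm_herm G).eigenvalues k)^2 * (U i k)^2
        = |(Mm_herm G).eigenvalues k| * (|(Mm_herm G).eigenvalues k| * (U i k)^2) := by
          rw [habs]; ring
      _ ≤ n' * (|(Mm_herm G).eigenvalues k| * (U i k)^2) :=
          mul_le_mul_of_nonneg_right hb (mul_nonneg ha hu)
  calc (c - (G.degree i:ℝ))^2 + (G.degree i:ℝ)
      = ∑ k, ((Mm_herm G).eigenvalues k)^2 * (U i k)^2 := hMM
    _ ≤ ∑ k, n' * (|(Mm_herm G).eigenvalues k| * (U i k)^2) :=
        Finset.sum_le_sum fun k _ => hstep k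
    _ = n' * ∑ k, |(Mm_herm G).eigenvalues k| * (U i k)^2 := by rw [← Finset.mul_sum]
    _ = vertexLapEnergy G i * n' := by rw [hLE, mul_comm]
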